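/- Let X be a compact uniform space equipped with a uniformly continuous action of a group G. Let U and V be entourages of X with V symmetric and V ∘ V ⊂ U. Let α be a finite open cover of X such that for every A ∈ α there exists x ∈ X with A ⊂ V[x], and let F ⊂ G be a finite subset. Then sep(X,G,F,U) ≤ N(α^(F)). -/

import Mathlib

open scoped Uniformity

/-- `coverNum α` is the minimal cardinality `N(α)` of a subcover of the cover `α`. -/
noncomputable def coverNum {X : Type*} (α : Set (Set X)) : ℕ :=
  sInf {n : ℕ | ∃ β : Finset (Set X), (β : Set (Set X)) ⊆ α ∧ β.card = n ∧
    ⋃₀ (β : Set (Set X)) = Set.univ}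

/-- `coverJoin α F` is the cover `α^(F) = ⋁_{g ∈ F} g⁻¹α`. -/
def coverJoin {G X : Type*} [SMul G X] (α : Set (Set X)) (F : Set G) : Set (Set X) :=
  {B | ∃ A : G → Set X, (∀ g ∈ F, A g ∈ α) ∧ B = ⋂ g ∈ F, (fun x => g • x) ⁻¹' A g}

/-- `dynEnt U F = U^(F) = {(x,y) : (g•x, g•y) ∈ U for all g ∈ F}`. -/
def dynEnt {G X : Type*} [SMul G X] (U : Set (X × X)) (F : Set G) : Set (X × X) :=
  {p | ∀ g ∈ F, (g • p.1, g • p.2) ∈ U}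

/-- `sepCard U F = sep(X,G,F,U)`: the maximal cardinality of an `(F,U)`-separated subset. -/
noncomputable def sepCard {G X : Type*} [SMul G X] (U : Set (X × X)) (F : Set G) : ℕ :=
  sSup {n : ℕ | ∃ Z : Finset X, Z.card = n ∧
    ∀ x ∈ Z, ∀ y ∈ Z, x ≠ y → (x, y) ∉ dynEnt U F}

/-- If `V` is a symmetric entourage with `V ∘ V ⊆ U` and every member of the finite open
cover `α` is contained in some `V[x]`, then `sep(X,G,F,U) ≤ N(α^(F))`. -/
theorem sepCard_le_coverNum {G X : Type*} [Group G]
    [UniformSpace X] [CompactSpace X] [MulAction G X]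
    (hcont : ∀ g : G, UniformContinuous fun x : X => g • x)
    (U V : Set (X × X)) (hU : U ∈ 𝓤 X) (hV : V ∈ 𝓤 X)
    (hVsymm : Prod.swap ⁻¹' V = V) (hVVU : SetRel.comp V V ⊆ U)
    (α : Set (Set X)) (hαfin : α.Finite) (hαopen : ∀ A ∈ α, IsOpen A)
    (hαcov : ⋃₀ α = Set.univ)
    (hsmall : ∀ A ∈ α, ∃ x : X, A ⊆ {y : X | (x, y) ∈ V})
    (F : Set G) (hF : F.Finite) :
    sepCard (G := G) U F ≤ coverNum (coverJoin α F) := by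
  classical
  -- Any two points in a member of `coverJoin α F` are not separated.
  have key : ∀ B ∈ coverJoin α F, ∀ x ∈ B, ∀ y ∈ B, (x, y) ∈ dynEnt U F := by
    rintro B ⟨A, hA, rfl⟩ x hx y hy g hg
    have hxg : g • x ∈ A g := by
      have := Set.mem_iInter.1 hx g
      simpa using Set.mem_iInter.1 (Set.mem_iInter.1 hx g) hg
    have hyg : g • y ∈ A g := by
      simpa using Set.mem_iInter.1 (Set.mem_iInter.1 hy g) hg
    obtain ⟨z, hz⟩ := hsmall (A g) (hA g hg)
    have h1 : (z, g • x) ∈ V := hz hxg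
    have h2 : (z, g • y) ∈ V := hz hyg
    have h1' : (g • x, z) ∈ V := by
      have : (z, g • x) ∈ Prod.swap ⁻¹' V := by rw [hVsymm]; exact h1
      simpa [Set.mem_preimage] using this
    exact hVVU ⟨z, h1', h2⟩
  -- `coverJoin α F` is an open cover of `X`.
  have hcov : ⋃₀ coverJoin α F = Set.univ := by
    apply Set.eq_univ_of_forall
    intro x
    have hne : ∀ g : G, ∃ A ∈ α, g • x ∈ A := by
      intro g
      have : g • x ∈ ⋃₀ α := by rw [hαcov]; trivial
      simpa [Set.mem_sUnion] using this
    choose A hAα hAx using hne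
    refine ⟨⋂ g ∈ F, (fun y => g • y) ⁻¹' A g, ⟨A, fun g _ => hAα g, rfl⟩, ?_⟩
    exact Set.mem_iInter.2 fun g => Set.mem_iInter.2 fun _ => hAx g
  have hopen : ∀ B ∈ coverJoin α F, IsOpen B := by
    rintro B ⟨A, hA, rfl⟩
    haveI := hF.to_subtype
    rw [Set.biInter_eq_iInter]
    exact isOpen_iInter_of_finite fun g =>
      (hαopen _ (hA g g.2)).preimage (hcont g).continuous
  -- Extract a finite subcover.
  have hc : IsCompact (Set.univ : Set X) := isCompact_univ
  obtain ⟨t, ht⟩ := hc.elim_finite_subcover (fun B : coverJoin α F => (B : Set X))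
    (fun B => hopen B B.2) (by
      intro x _
      have : x ∈ ⋃₀ coverJoin α F := by rw [hcov]; trivial
      obtain ⟨B, hB, hxB⟩ := this
      exact Set.mem_iUnion.2 ⟨⟨B, hB⟩, hxB⟩)
  set T := {n : ℕ | ∃ β : Finset (Set X), (β : Set (Set X)) ⊆ coverJoin α F ∧ β.card = n ∧
    ⋃₀ (β : Set (Set X)) = Set.univ}
  have hTne : T.Nonempty := by
    have hmem : (t.image (fun B : coverJoin α F => (B : Set X))).card ∈ T := by
      refine ⟨t.image (fun B : coverJoin α F => (B : Set X)), ?_, rfl, ?_⟩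
      · intro B hB
        simp only [Finset.coe_image, Set.mem_image] at hB
        obtain ⟨C, _, rfl⟩ := hB
        exact C.2
      · apply Set.eq_univ_of_forall
        intro x
        have := ht (Set.mem_univ x)
        obtain ⟨B, hBt, hxB⟩ := Set.mem_iUnion₂.1 this
        exact ⟨B, by
          simpa using Finset.mem_image_of_mem (fun B : coverJoin α F => (B : Set X)) hBt,
          hxB⟩
    exact ⟨_, hmem⟩
  -- The minimal subcover realizes `coverNum`.
  have hmem : coverNum (coverJoin α F) ∈ T := Nat.sInf_mem hTne
  obtain ⟨β, hβsub, hβcard, hβcov⟩ := hmem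
  -- Bound sepCard.
  refine csSup_le ⟨0, ⟨∅, rfl, by simp⟩⟩ ?_
  rintro n ⟨Z, rfl, hZ⟩
  rw [← hβcard]
  -- choose for each x a member of β containing it
  have hchoice : ∀ x : X, ∃ B ∈ β, x ∈ B := by
    intro x
    have : x ∈ ⋃₀ (β : Set (Set X)) := by rw [hβcov]; trivial
    simpa [Set.mem_sUnion] using this
  choose f hfβ hfx using hchoice
  refine Finset.card_le_card_of_injOn f (fun x _ => hfβ x) ?_
  intro x hx y hy hxy
  by_contra hne
  exact hZ x hx y hy hne (key (f x) (hβsub (hfβ x)) x (hfx x) y (hxy ▸ hfx y))
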